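/- For every nonempty area sequence w = u a (where a is the last letter of w), the word ψ(u) has at least a + 1 admissible insertion positions; consequently ψ(w) is well defined, and ψ(w) is an area sequence of the same size as w. -/

import Mathlib

/-- The `i`-th letter of the word `w` (`1`-indexed, as in the paper);
defaults to `0` out of range. -/
def get1 (w : List ℕ) (i : ℕ) : ℕ := w.getD (i - 1) 0

/-- `w` is the area sequence of a Dyck path: the first letter is `0` and each
letter exceeds the previous one by at most one. -/
def IsAreaSeq (w : List ℕ) : Prop :=
  (w ≠ [] → get1 w 1 = 0) ∧ ∀ i, 1 ≤ i → i < w.length → get1 w (i + 1) ≤ get1 w i + 1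

/-- Insertion at position `i` (for `0 ≤ i ≤ n`): `ins w 0` prepends a `0`, and
for `1 ≤ i ≤ n`, `ins w i` inserts the letter `w_i + 1` just after position `i`. -/
def ins (w : List ℕ) (i : ℕ) : List ℕ :=
  w.take i ++ (if i = 0 then 0 else get1 w i + 1) :: w.drop i

/-- The area statistic: the sum of the letters. -/
def area (w : List ℕ) : ℕ := w.sum

/-- The dinv statistic: `dinv w = Σ_i d_i` where `d_i` is the number of `j > i`
with `w_j = w_i` or `w_j = w_i - 1`. -/
def dinv (w : List ℕ) : ℕ :=
  ∑ i ∈ Finset.Icc 1 w.length,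
    ((Finset.Ioc i w.length).filter
      (fun j => get1 w j = get1 w i ∨ get1 w j + 1 = get1 w i)).card

/-- The maximal value of a word (`0` for the empty word). -/
def maxVal (w : List ℕ) : ℕ := w.foldr max 0

/-- Positions of the letters of maximal value `m`. -/
def Maxb (w : List ℕ) : Finset ℕ :=
  (Finset.Icc 1 w.length).filter (fun i => get1 w i = maxVal w)

/-- Positions `i` with `w_i = m - 1` such that all letters after position `i`
are `< m`. -/
def Maxa (w : List ℕ) : Finset ℕ :=
  (Finset.Icc 1 w.length).filter (fun i =>
    get1 w i + 1 = maxVal w ∧ ∀ j ∈ Finset.Ioc i w.length, get1 w j < maxVal w)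

/-- The position of the leftmost letter equal to the maximal value `m` in the
rightmost block of consecutive letters equal to `m`. -/
def i0 (w : List ℕ) : ℕ :=
  ((Finset.Icc 1 w.length).filter (fun i =>
    get1 w i = maxVal w ∧ (i = 1 ∨ get1 w (i - 1) ≠ maxVal w))).sup id

/-- The admissible insertion positions of `w`, listed in admissible order:
the elements of `Maxb w` in decreasing order, then the elements of `Maxa w`
in decreasing order, then `i0 w - 1`.  The empty word has the single
admissible insertion position `0`. -/
def admissible (w : List ℕ) : List ℕ :=
  if w = [] then [0]
  else ((Maxb w).sort (· ≤ ·)).reverse ++ ((Maxa w).sort (· ≤ ·)).reverse ++ [i0 w - 1]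

/-- Auxiliary version of the map `ψ`, reading the reversed word. -/
def psiRev : List ℕ → List ℕ
  | [] => []
  | a :: u => ins (psiRev u) ((admissible (psiRev u)).getD a 0)

/-- The map `ψ`: `ψ(ε) = ε` and `ψ(u a) = ins_{c_a}(ψ(u))` where
`c_0, c_1, …, c_k` are the admissible insertion positions of `ψ(u)` in
admissible order. -/
def psi (w : List ℕ) : List ℕ := psiRev w.reverse

/-- The bounce sequence: `b_1 = 0`, and `b_i = b_{i-1} + 1` if
`b_{i-1} + 1 ≤ w_i`, otherwise `b_i = 0`. -/
def bseq (w : List ℕ) : ℕ → ℕ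
  | 0 => 0
  | 1 => 0
  | (i + 2) => if bseq w (i + 1) + 1 ≤ get1 w (i + 2) then bseq w (i + 1) + 1 else 0

/-- The bounces of `w`: positions `1 < i ≤ n` with `b_i = 0`. -/
def bounces (w : List ℕ) : Finset ℕ :=
  (Finset.Icc 2 w.length).filter (fun i => bseq w i = 0)

/-- The bounce statistic: the sum of the reversed positions `n - i + 1` of the
bounces of `w`. -/
def bounce (w : List ℕ) : ℕ := ∑ i ∈ bounces w, (w.length - i + 1)

-- chunk 1 lemmas

lemma length_ins (w : List ℕ) (c : ℕ) (hc : c ≤ w.length) :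
    (ins w c).length = w.length + 1 := by
  simp [ins]; omega

lemma get1_ins_of_le {w : List ℕ} {c i : ℕ} (h1 : 1 ≤ i) (h2 : i ≤ c) (hc : c ≤ w.length) :
    get1 (ins w c) i = get1 w i := by
  have hl : (w.take c).length = c := by simp; omega
  simp only [get1, ins]
  rw [List.getD_append _ _ _ _ (by omega), List.getD_eq_getElem?_getD,
    List.getD_eq_getElem?_getD, List.getElem?_take, if_pos (by omega)]

lemma get1_ins_mid {w : List ℕ} {c : ℕ} (hc : c ≤ w.length) :
    get1 (ins w c) (c + 1) = if c = 0 then 0 else get1 w c + 1 := by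
  have hl : (w.take c).length = c := by simp; omega
  simp only [get1, ins]
  rw [List.getD_append_right _ _ _ _ (by omega), hl]
  simp

lemma get1_ins_of_gt {w : List ℕ} {c i : ℕ} (h1 : c + 1 < i) (hc : c ≤ w.length) :
    get1 (ins w c) i = get1 w (i - 1) := by
  have hl : (w.take c).length = c := by simp; omega
  simp only [get1, ins]
  rw [List.getD_append_right _ _ _ _ (by rw [hl]; omega), hl]
  have h3 : i - 1 - c = (i - c - 2) + 1 := by omega
  rw [h3]
  simp only [List.getD_cons_succ]
  rw [List.getD_eq_getElem?_getD, List.getD_eq_getElem?_getD, List.getElem?_drop]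
  have h4 : c + (i - c - 2) = i - 1 - 1 := by omega
  rw [h4]

lemma maxVal_cons (x : ℕ) (l : List ℕ) : maxVal (x :: l) = max x (maxVal l) := rfl

lemma maxVal_append (l1 l2 : List ℕ) : maxVal (l1 ++ l2) = max (maxVal l1) (maxVal l2) := by
  induction l1 with
  | nil => simp [maxVal]
  | cons x l ih => simp [maxVal_cons, ih, max_assoc]

lemma maxVal_ins (w : List ℕ) (c : ℕ) :
    maxVal (ins w c) = max (if c = 0 then 0 else get1 w c + 1) (maxVal w) := by
  have hw : maxVal w = max (maxVal (w.take c)) (maxVal (w.drop c)) := by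
    conv_lhs => rw [← List.take_append_drop c w]
    rw [maxVal_append]
  rw [ins, maxVal_append, maxVal_cons, hw]
  omega

lemma mem_le_maxVal {w : List ℕ} {x : ℕ} (h : x ∈ w) : x ≤ maxVal w := by
  induction w with
  | nil => simp at h
  | cons y l ih =>
    rw [maxVal_cons]
    rcases List.mem_cons.1 h with h | h
    · omega
    · have := ih h; omega

lemma get1_le_maxVal {w : List ℕ} {i : ℕ} (h1 : 1 ≤ i) (h2 : i ≤ w.length) :
    get1 w i ≤ maxVal w := by
  have hlt : i - 1 < w.length := by omega
  have : get1 w i = w[i-1] := List.getD_eq_getElem w 0 hlt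
  rw [this]
  exact mem_le_maxVal (List.getElem_mem hlt)

lemma mem_Maxb {w : List ℕ} {i : ℕ} :
    i ∈ Maxb w ↔ 1 ≤ i ∧ i ≤ w.length ∧ get1 w i = maxVal w := by
  simp [Maxb, Finset.mem_filter, Finset.mem_Icc, and_assoc]

lemma mem_Maxa {w : List ℕ} {i : ℕ} :
    i ∈ Maxa w ↔ 1 ≤ i ∧ i ≤ w.length ∧ get1 w i + 1 = maxVal w ∧
      ∀ j, i < j → j ≤ w.length → get1 w j < maxVal w := by
  simp [Maxa, Finset.mem_filter, Finset.mem_Icc, Finset.mem_Ioc, and_assoc]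

lemma maxVal_exists_mem {w : List ℕ} (h : maxVal w ≠ 0) : maxVal w ∈ w := by
  induction w with
  | nil => simp [maxVal] at h
  | cons x l ih =>
    rw [maxVal_cons] at h ⊢
    rcases Nat.le_total x (maxVal l) with hle | hle
    · rw [max_eq_right hle] at h ⊢; exact List.mem_cons_of_mem _ (ih h)
    · rw [max_eq_left hle]; exact List.mem_cons_self

lemma Maxb_nonempty {w : List ℕ} (hne : w ≠ []) : (Maxb w).Nonempty := by
  by_cases h : maxVal w = 0
  · refine ⟨1, mem_Maxb.2 ⟨le_refl 1, ?_, ?_⟩⟩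
    · exact Nat.one_le_iff_ne_zero.2 (by simpa using hne)
    · have := get1_le_maxVal (w := w) (i := 1) le_rfl
        (Nat.one_le_iff_ne_zero.2 (by simpa using hne))
      omega
  · obtain ⟨j, hj, hv⟩ := List.mem_iff_getElem.1 (maxVal_exists_mem h)
    refine ⟨j + 1, mem_Maxb.2 ⟨by omega, by omega, ?_⟩⟩
    have : get1 w (j + 1) = w[j] := by
      unfold get1
      simp only [Nat.add_sub_cancel]
      exact List.getD_eq_getElem w 0 hj
    rw [this, hv]

lemma i0_le (w : List ℕ) : i0 w ≤ w.length := by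
  apply Finset.sup_le
  intro i hi
  simp only [Finset.mem_filter, Finset.mem_Icc] at hi
  exact hi.1.2

-- chunk 2

lemma length_pos_of_ne {w : List ℕ} (hne : w ≠ []) : 1 ≤ w.length :=
  Nat.one_le_iff_ne_zero.2 (by simpa using hne)

lemma i0_spec {w : List ℕ} (hv : IsAreaSeq w) (hne : w ≠ []) (hm : maxVal w ≠ 0) :
    2 ≤ i0 w ∧ i0 w ≤ w.length ∧ get1 w (i0 w) = maxVal w ∧
      get1 w (i0 w - 1) + 1 = maxVal w := by
  set S := (Finset.Icc 1 w.length).filter (fun i =>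
    get1 w i = maxVal w ∧ (i = 1 ∨ get1 w (i - 1) ≠ maxVal w)) with hS
  have hSne : S.Nonempty := by
    obtain ⟨x, hx⟩ := Maxb_nonempty hne
    -- take the minimal element of Maxb
    obtain ⟨y, hy, hymin⟩ : ∃ y ∈ Maxb w, ∀ z ∈ Maxb w, y ≤ z :=
      ⟨(Maxb w).min' ⟨x, hx⟩, (Maxb w).min'_mem _, fun z hz => (Maxb w).min'_le z hz⟩
    obtain ⟨hy1, hy2, hy3⟩ := mem_Maxb.1 hy
    refine ⟨y, ?_⟩
    rw [hS, Finset.mem_filter, Finset.mem_Icc]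
    refine ⟨⟨hy1, hy2⟩, hy3, ?_⟩
    by_cases h1 : y = 1
    · exact Or.inl h1
    · refine Or.inr fun hcon => ?_
      have : y - 1 ∈ Maxb w := mem_Maxb.2 ⟨by omega, by omega, hcon⟩
      have := hymin _ this
      omega
  obtain ⟨i, hiS, hisup⟩ := Finset.exists_mem_eq_sup S hSne id
  have hi0 : i0 w = i := hisup
  rw [hS, Finset.mem_filter, Finset.mem_Icc] at hiS
  obtain ⟨⟨hi1, hi2⟩, hival, hicond⟩ := hiS
  have hne1 : i ≠ 1 := by
    intro h
    have h0 : get1 w 1 = 0 := hv.1 hne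
    rw [h] at hival
    rw [h0] at hival
    exact hm hival.symm
  have hcond : get1 w (i - 1) ≠ maxVal w := by tauto
  have hstep : get1 w ((i - 1) + 1) ≤ get1 w (i - 1) + 1 := hv.2 (i - 1) (by omega) (by omega)
  have heq : (i - 1) + 1 = i := by omega
  rw [heq] at hstep
  have hle : get1 w (i - 1) ≤ maxVal w := get1_le_maxVal (by omega) (by omega)
  refine ⟨by omega, by omega, by rw [hi0]; exact hival, ?_⟩
  rw [hi0]
  omega

lemma maxVal_zero_get1 {w : List ℕ} (hm : maxVal w = 0) {i : ℕ} (h1 : 1 ≤ i)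
    (h2 : i ≤ w.length) : get1 w i = 0 := by
  have := get1_le_maxVal h1 h2
  omega

lemma i0_eq_one {w : List ℕ} (hne : w ≠ []) (hm : maxVal w = 0) : i0 w = 1 := by
  have h1 : 1 ≤ w.length := length_pos_of_ne hne
  unfold i0
  have : ((Finset.Icc 1 w.length).filter (fun i =>
      get1 w i = maxVal w ∧ (i = 1 ∨ get1 w (i - 1) ≠ maxVal w))) = {1} := by
    ext i
    simp only [Finset.mem_filter, Finset.mem_Icc, Finset.mem_singleton]
    constructor
    · rintro ⟨⟨hi1, hi2⟩, _, h | h⟩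
      · exact h
      · exfalso
        apply h
        rw [hm]
        rcases Nat.lt_or_ge i 2 with h2 | h2
        · have hi0 : i - 1 = 0 := by omega
          rw [hi0]
          show get1 w 1 = 0
          exact maxVal_zero_get1 hm le_rfl h1
        · exact maxVal_zero_get1 hm (by omega) (by omega)
    · rintro rfl
      exact ⟨⟨le_rfl, h1⟩, by rw [hm]; exact maxVal_zero_get1 hm le_rfl h1, Or.inl rfl⟩
  rw [this]
  simp

lemma admissible_length {w : List ℕ} (hne : w ≠ []) :
    (admissible w).length = (Maxb w).card + (Maxa w).card + 1 := by
  simp [admissible, hne, Finset.length_sort]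
  omega

lemma isAreaSeq_ins {w : List ℕ} (hv : IsAreaSeq w) {c : ℕ} (hc : c ≤ w.length) :
    IsAreaSeq (ins w c) := by
  constructor
  · intro _
    by_cases h0 : c = 0
    · subst h0
      simpa using get1_ins_mid (w := w) (Nat.zero_le _)
    · have h1 : 1 ≤ w.length := by omega
      rw [get1_ins_of_le le_rfl (by omega) hc]
      exact hv.1 (by intro h; rw [h] at h1; simp at h1)
  · intro i hi1 hi2
    rw [length_ins w c hc] at hi2
    rcases Nat.lt_or_ge (i + 1) (c + 1) with h | h
    · -- i + 1 ≤ c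
      rw [get1_ins_of_le (by omega) (by omega) hc, get1_ins_of_le (by omega) (by omega) hc]
      exact hv.2 i hi1 (by omega)
    rcases Nat.eq_or_lt_of_le h with h | h
    · -- i = c
      have hic : i = c := by omega
      subst hic
      rw [get1_ins_mid hc, get1_ins_of_le hi1 le_rfl hc, if_neg (by omega)]
    rcases Nat.eq_or_lt_of_le h with h' | h'
    · -- i = c + 1
      have hic : i = c + 1 := by omega
      subst hic
      rw [get1_ins_of_gt (by omega) hc, get1_ins_mid hc]
      simp only [Nat.add_sub_cancel]
      by_cases h0 : c = 0
      · subst h0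
        have h01 : get1 w 1 = 0 := hv.1 (by intro hw0; subst hw0; simp at hi2)
        simp [h01]
      · rw [if_neg h0]
        have := hv.2 c (by omega) (by omega)
        omega
    · -- i > c + 1
      rw [get1_ins_of_gt (by omega) hc, get1_ins_of_gt (by omega) hc]
      have : get1 w ((i - 1) + 1) ≤ get1 w (i - 1) + 1 := hv.2 (i - 1) (by omega) (by omega)
      have heq : (i - 1) + 1 = i ∧ i + 1 - 1 = i := by omega
      rw [heq.1] at this
      rw [heq.2]
      exact this

-- chunk 3: the a-th element of the reversed sort

lemma sort_rev_getD (S : Finset ℕ) (a : ℕ) (ha : a < S.card) :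
    ((S.sort (· ≤ ·)).reverse.getD a 0) ∈ S ∧
      a ≤ (S.filter (fun x => (S.sort (· ≤ ·)).reverse.getD a 0 < x)).card := by
  set l := S.sort (· ≤ ·) with hl
  have hlen : l.length = S.card := Finset.length_sort _
  have hrev : l.reverse.length = S.card := by simp [hlen]
  have hslt : l.Pairwise (· < ·) := (Finset.sortedLT_sort S).pairwise
  have hget : ∀ t : ℕ, t < S.card → l.reverse.getD t 0 = l[S.card - 1 - t]'(by omega) := by
    intro t ht
    rw [List.getD_eq_getElem _ _ (by omega), List.getElem_reverse]
    congr 1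
    omega
  have hmem : ∀ t : ℕ, (h : t < l.length) → l[t] ∈ S := fun t h =>
    (Finset.mem_sort (α := ℕ) (· ≤ ·)).1 (List.getElem_mem h)
  have hmono : ∀ s t : ℕ, (hs : s < l.length) → (ht : t < l.length) → s < t →
      l[s] < l[t] := by
    intro s t hs ht hst
    exact List.Pairwise.rel_get_of_lt hslt (a := ⟨s, hs⟩) (b := ⟨t, ht⟩) hst
  constructor
  · rw [hget a ha]
    exact hmem _ _
  · have key : (Finset.range a).card ≤
        (S.filter (fun x => l.reverse.getD a 0 < x)).card := by
      apply Finset.card_le_card_of_injOn (fun t => l.reverse.getD t 0)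
      · intro t ht
        rw [Finset.mem_coe, Finset.mem_range] at ht
        rw [Finset.mem_coe, Finset.mem_filter]
        beta_reduce
        rw [hget t (by omega), hget a ha]
        exact ⟨hmem _ _, hmono _ _ (by omega) (by omega) (by omega)⟩
      · intro t ht t' ht' hev
        simp only [Finset.coe_range, Set.mem_Iio] at ht ht'
        have hev' : l.reverse.getD t 0 = l.reverse.getD t' 0 := hev
        by_contra hne
        rcases Nat.lt_or_ge t t' with h | h
        · rw [hget t (by omega), hget t' (by omega)] at hev'
          have := hmono (S.card - 1 - t') (S.card - 1 - t) (by omega) (by omega) (by omega)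
          omega
        · have h' : t' < t := by omega
          rw [hget t (by omega), hget t' (by omega)] at hev'
          have := hmono (S.card - 1 - t) (S.card - 1 - t') (by omega) (by omega) (by omega)
          omega
    simpa using key

-- chunk 4: case lemmas

lemma maxa_card_le {v : List ℕ} {c : ℕ} (hc2 : c ≤ v.length) (hc0 : c ≠ 0)
    (hm' : maxVal (ins v c) = maxVal v) :
    ((Maxa v).filter (fun x => c < x)).card ≤ (Maxa (ins v c)).card := by
  apply Finset.card_le_card_of_injOn (fun x => x + 1)
  · intro x hx
    rw [Finset.mem_coe, Finset.mem_filter] at hx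
    beta_reduce
    obtain ⟨hx', hcx⟩ := hx
    obtain ⟨hx1, hx2, hx3, hx4⟩ := mem_Maxa.1 hx'
    refine mem_Maxa.2 ⟨by omega, by rw [length_ins v c hc2]; omega, ?_, ?_⟩
    · rw [get1_ins_of_gt (by omega) hc2, hm']
      simpa using hx3
    · intro j hj1 hj2
      rw [length_ins v c hc2] at hj2
      rw [get1_ins_of_gt (by omega) hc2, hm']
      exact hx4 (j - 1) (by omega) (by omega)
  · intro x _ y _ h
    simpa using h

lemma caseB {v : List ℕ} {a c : ℕ}
    (hc : c ∈ Maxb v) (hT : a ≤ ((Maxb v).filter (fun x => c < x)).card) :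
    a + 1 ≤ (Maxb (ins v c)).card + (Maxa (ins v c)).card := by
  obtain ⟨hc1, hc2, hc3⟩ := mem_Maxb.1 hc
  have hc0 : c ≠ 0 := by omega
  have hm' : maxVal (ins v c) = maxVal v + 1 := by
    rw [maxVal_ins, if_neg hc0, hc3]
    omega
  have hlen := length_ins v c hc2
  have h1 : 1 ≤ (Maxb (ins v c)).card := by
    apply Finset.card_pos.2
    refine ⟨c + 1, mem_Maxb.2 ⟨by omega, by omega, ?_⟩⟩
    rw [get1_ins_mid hc2, if_neg hc0, hc3, hm']
  have h2 : a ≤ (Maxa (ins v c)).card := by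
    apply le_trans hT
    apply Finset.card_le_card_of_injOn (fun x => x + 1)
    · intro x hx
      rw [Finset.mem_coe, Finset.mem_filter] at hx
      beta_reduce
      obtain ⟨hx', hcx⟩ := hx
      obtain ⟨hx1, hx2, hx3⟩ := mem_Maxb.1 hx'
      refine mem_Maxa.2 ⟨by omega, by omega, ?_, ?_⟩
      · rw [get1_ins_of_gt (by omega) hc2, hm']
        simpa using hx3
      · intro j hj1 hj2
        rw [hlen] at hj2
        rw [get1_ins_of_gt (by omega) hc2, hm']
        have := get1_le_maxVal (w := v) (i := j - 1) (by omega) (by omega)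
        omega
    · intro x _ y _ h
      simpa using h
  omega

lemma caseA {v : List ℕ} {a c : ℕ} (hc : c ∈ Maxa v)
    (hT : a ≤ (Maxb v).card + ((Maxa v).filter (fun x => c < x)).card) :
    a + 1 ≤ (Maxb (ins v c)).card + (Maxa (ins v c)).card := by
  obtain ⟨hc1, hc2, hc3, hc4⟩ := mem_Maxa.1 hc
  have hc0 : c ≠ 0 := by omega
  have hm' : maxVal (ins v c) = maxVal v := by
    rw [maxVal_ins, if_neg hc0, hc3]
    omega
  have hlen := length_ins v c hc2
  have hb : (Maxb v).card + 1 ≤ (Maxb (ins v c)).card := by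
    have hnotmem : c + 1 ∉ Maxb v := by
      intro hmem
      obtain ⟨_, h2', h3'⟩ := mem_Maxb.1 hmem
      have := hc4 (c + 1) (by omega) h2'
      omega
    have hsub : insert (c + 1) (Maxb v) ⊆ Maxb (ins v c) := by
      intro x hx
      rcases Finset.mem_insert.1 hx with rfl | hx
      · refine mem_Maxb.2 ⟨by omega, by omega, ?_⟩
        rw [get1_ins_mid hc2, if_neg hc0, hc3, hm']
      · obtain ⟨hx1, hx2, hx3⟩ := mem_Maxb.1 hx
        have hxc : x < c := by
          rcases Nat.lt_trichotomy x c with h | h | h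
          · exact h
          · exfalso; rw [h] at hx3; omega
          · exfalso; have := hc4 x h hx2; omega
        refine mem_Maxb.2 ⟨hx1, by omega, ?_⟩
        rw [get1_ins_of_le hx1 (by omega) hc2, hx3, hm']
    calc (Maxb v).card + 1 = (insert (c + 1) (Maxb v)).card :=
          (Finset.card_insert_of_notMem hnotmem).symm
      _ ≤ _ := Finset.card_le_card hsub
  have ha' := maxa_card_le hc2 hc0 hm'
  omega

lemma case0 {v : List ℕ} (hv : IsAreaSeq v) (hne : v ≠ []) {a : ℕ}
    (ha : a ≤ (Maxb v).card + (Maxa v).card) :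
    a + 1 ≤ (Maxb (ins v (i0 v - 1))).card + (Maxa (ins v (i0 v - 1))).card := by
  by_cases hm : maxVal v = 0
  · have hi : i0 v = 1 := i0_eq_one hne hm
    rw [hi]
    simp only [Nat.sub_self]
    have hlen := length_ins v 0 (Nat.zero_le _)
    have hm' : maxVal (ins v 0) = 0 := by rw [maxVal_ins, if_pos rfl, hm]; simp
    have hsub : Finset.Icc 1 (v.length + 1) ⊆ Maxb (ins v 0) := by
      intro x hx
      rw [Finset.mem_Icc] at hx
      refine mem_Maxb.2 ⟨hx.1, by omega, ?_⟩
      rw [hm']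
      rcases Nat.eq_or_lt_of_le hx.1 with h1 | h1
      · rw [← h1]
        have := get1_ins_mid (w := v) (c := 0) (Nat.zero_le _)
        simpa using this
      · rw [get1_ins_of_gt (by omega) (Nat.zero_le _)]
        exact maxVal_zero_get1 hm (by omega) (by omega)
    have hcard : v.length + 1 ≤ (Maxb (ins v 0)).card := by
      have := Finset.card_le_card hsub
      simpa using this
    have hble : (Maxb v).card ≤ v.length := by
      have h' : Maxb v ⊆ Finset.Icc 1 v.length := Finset.filter_subset _ _
      have := Finset.card_le_card h'
      simpa using this
    have hae : (Maxa v) = ∅ := by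
      rw [Finset.eq_empty_iff_forall_notMem]
      intro x hx
      obtain ⟨_, _, h3, _⟩ := mem_Maxa.1 hx
      omega
    rw [hae] at ha
    simp at ha
    omega
  · obtain ⟨hi2, hile, hival, hprev⟩ := i0_spec hv hne hm
    set c := i0 v - 1 with hcdef
    have hc1 : 1 ≤ c := by omega
    have hc2 : c ≤ v.length := by omega
    have hc0 : c ≠ 0 := by omega
    have hcval : get1 v c + 1 = maxVal v := hprev
    have hival' : get1 v (c + 1) = maxVal v := by
      have : c + 1 = i0 v := by omega
      rw [this]; exact hival
    have hm' : maxVal (ins v c) = maxVal v := by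
      rw [maxVal_ins, if_neg hc0, hcval]
      omega
    have hlen := length_ins v c hc2
    have hb : (Maxb v).card + 1 ≤ (Maxb (ins v c)).card := by
      have hinj : Function.Injective (fun x => if x ≤ c then x else x + 1) := by
        intro x y h
        simp only at h
        split_ifs at h <;> omega
      have hnotmem : c + 1 ∉ (Maxb v).image (fun x => if x ≤ c then x else x + 1) := by
        intro hmem
        obtain ⟨x, hx, hfx⟩ := Finset.mem_image.1 hmem
        obtain ⟨hx1, hx2, hx3⟩ := mem_Maxb.1 hx
        have hxc : x ≠ c := by intro h; rw [h] at hx3; omega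
        split_ifs at hfx <;> omega
      have hsub : insert (c + 1) ((Maxb v).image (fun x => if x ≤ c then x else x + 1)) ⊆
          Maxb (ins v c) := by
        intro y hy
        rcases Finset.mem_insert.1 hy with rfl | hy
        · refine mem_Maxb.2 ⟨by omega, by omega, ?_⟩
          rw [get1_ins_mid hc2, if_neg hc0, hcval, hm']
        · obtain ⟨x, hx, hfx⟩ := Finset.mem_image.1 hy
          obtain ⟨hx1, hx2, hx3⟩ := mem_Maxb.1 hx
          have hxc : x ≠ c := by intro h; rw [h] at hx3; omega
          by_cases hle : x ≤ c
          · rw [if_pos hle] at hfx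
            subst hfx
            refine mem_Maxb.2 ⟨hx1, by omega, ?_⟩
            rw [get1_ins_of_le hx1 hle hc2, hx3, hm']
          · rw [if_neg hle] at hfx
            subst hfx
            refine mem_Maxb.2 ⟨by omega, by omega, ?_⟩
            rw [get1_ins_of_gt (by omega) hc2, hm']
            simpa using hx3
      calc (Maxb v).card + 1
          = (insert (c + 1) ((Maxb v).image (fun x => if x ≤ c then x else x + 1))).card := by
            rw [Finset.card_insert_of_notMem hnotmem, Finset.card_image_of_injective _ hinj]
        _ ≤ _ := Finset.card_le_card hsub
    have hfilter : (Maxa v).filter (fun x => c < x) = Maxa v := by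
      apply Finset.filter_true_of_mem
      intro x hx
      obtain ⟨hx1, hx2, hx3, hx4⟩ := mem_Maxa.1 hx
      by_contra hcon
      push_neg at hcon
      have := hx4 (i0 v) (by omega) hile
      omega
    have ha' := maxa_card_le hc2 hc0 hm'
    rw [hfilter] at ha'
    omega

-- chunk 5

lemma admissible_getD_spec {v : List ℕ} (hv : IsAreaSeq v) (hne : v ≠ []) {a : ℕ}
    (ha : a < (admissible v).length) :
    (admissible v).getD a 0 ≤ v.length ∧
      a + 1 ≤ (Maxb (ins v ((admissible v).getD a 0))).card +
        (Maxa (ins v ((admissible v).getD a 0))).card := by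
  have hadm : admissible v = ((Maxb v).sort (· ≤ ·)).reverse ++
      (((Maxa v).sort (· ≤ ·)).reverse ++ [i0 v - 1]) := by
    simp [admissible, hne]
  have hlb : ((Maxb v).sort (· ≤ ·)).reverse.length = (Maxb v).card := by simp
  have hla : ((Maxa v).sort (· ≤ ·)).reverse.length = (Maxa v).card := by simp
  rw [admissible_length hne] at ha
  rcases Nat.lt_or_ge a (Maxb v).card with h1 | h1
  · have hc : (admissible v).getD a 0 = ((Maxb v).sort (· ≤ ·)).reverse.getD a 0 := by
      rw [hadm, List.getD_append _ _ _ _ (by omega)]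
    obtain ⟨hmem, hcnt⟩ := sort_rev_getD (Maxb v) a h1
    rw [hc]
    exact ⟨(mem_Maxb.1 hmem).2.1, caseB hmem hcnt⟩
  rcases Nat.lt_or_ge a ((Maxb v).card + (Maxa v).card) with h2 | h2
  · have hc : (admissible v).getD a 0 =
        ((Maxa v).sort (· ≤ ·)).reverse.getD (a - (Maxb v).card) 0 := by
      rw [hadm, List.getD_append_right _ _ _ _ (by omega), hlb,
        List.getD_append _ _ _ _ (by omega)]
    obtain ⟨hmem, hcnt⟩ := sort_rev_getD (Maxa v) (a - (Maxb v).card) (by omega)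
    rw [hc]
    exact ⟨(mem_Maxa.1 hmem).2.1, caseA hmem (by omega)⟩
  · have h3 : a = (Maxb v).card + (Maxa v).card := by omega
    have hc : (admissible v).getD a 0 = i0 v - 1 := by
      rw [hadm, List.getD_append_right _ _ _ _ (by omega), hlb,
        List.getD_append_right _ _ _ _ (by omega), hla]
      have h4 : a - (Maxb v).card - (Maxa v).card = 0 := by omega
      rw [h4]
      rfl
    rw [hc]
    have := i0_le v
    exact ⟨by omega, case0 hv hne (by omega)⟩

lemma isAreaSeq_dropLast {l : List ℕ} {x : ℕ} (h : IsAreaSeq (l ++ [x])) : IsAreaSeq l := by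
  have hget : ∀ i, 1 ≤ i → i ≤ l.length → get1 (l ++ [x]) i = get1 l i := by
    intro i h1 h2
    unfold get1
    rw [List.getD_append _ _ _ _ (by omega)]
  constructor
  · intro hne
    have h0 := h.1 (by simp)
    rwa [hget 1 le_rfl (length_pos_of_ne hne)] at h0
  · intro i h1 h2
    have h0 := h.2 i h1 (by simp; omega)
    rwa [hget i h1 (by omega), hget (i + 1) (by omega) (by omega)] at h0

lemma last_two {l : List ℕ} {x y : ℕ} (h : IsAreaSeq (l ++ [x, y])) : y ≤ x + 1 := by
  have e1 : get1 (l ++ [x, y]) (l.length + 1) = x := by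
    unfold get1
    rw [List.getD_append_right _ _ _ _ (by omega)]
    have : l.length + 1 - 1 - l.length = 0 := by omega
    rw [this]
    rfl
  have e2 : get1 (l ++ [x, y]) (l.length + 2) = y := by
    unfold get1
    rw [List.getD_append_right _ _ _ _ (by omega)]
    have : l.length + 2 - 1 - l.length = 1 := by omega
    rw [this]
    rfl
  have h2 := h.2 (l.length + 1) (by omega) (by simp)
  have h3 : l.length + 1 + 1 = l.length + 2 := rfl
  rw [h3, e1, e2] at h2
  exact h2

lemma psiRev_aux : ∀ (r : List ℕ), IsAreaSeq r.reverse →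
    IsAreaSeq (psiRev r) ∧ (psiRev r).length = r.length ∧
      (∀ b r', r = b :: r' → b + 2 ≤ (admissible (psiRev r)).length) := by
  intro r
  induction r with
  | nil =>
    intro _
    refine ⟨⟨fun h => absurd rfl h, ?_⟩, rfl, ?_⟩
    · intro i h1 h2; simp [psiRev] at h2
    · intro b r' h; simp [psiRev] at h
  | cons a r ih =>
    intro hw
    have hw' : IsAreaSeq (r.reverse ++ [a]) := by simpa using hw
    have hprefix : IsAreaSeq r.reverse := isAreaSeq_dropLast hw'
    obtain ⟨h1, h2, h3⟩ := ih hprefix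
    cases r with
    | nil =>
      have ha0 : a = 0 := hw'.1 (by simp)
      subst ha0
      have hps : psiRev [0] = [0] := rfl
      have hadm2 : (admissible [0]).length = 2 := by
        rw [admissible_length (by simp)]
        have hb : Maxb [0] = {1} := by
          unfold Maxb
          rw [show ([0] : List ℕ).length = 1 from rfl, Finset.Icc_self,
            Finset.filter_singleton]
          simp [get1, maxVal]
        have hA : Maxa [0] = ∅ := by
          unfold Maxa
          rw [show ([0] : List ℕ).length = 1 from rfl, Finset.Icc_self,
            Finset.filter_singleton]
          simp [get1, maxVal]
        rw [hb, hA]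
        simp
      refine ⟨?_, by rw [hps], ?_⟩
      · rw [hps]
        exact ⟨fun _ => rfl, by intro i hi1 hi2; simp at hi2; omega⟩
      · intro b r' hbr
        have hb0 : b = 0 := by injection hbr with hb _; omega
        subst hb0
        rw [hps, hadm2]
    | cons b r'' =>
      have hab : a ≤ b + 1 := by
        apply last_two (l := r''.reverse) (x := b) (y := a)
        simpa using hw
      set v := psiRev (b :: r'') with hvdef
      have hvne : v ≠ [] := by
        intro hcon
        rw [hcon] at h2
        simp at h2
      have hadm := h3 b r'' rfl
      have ha : a < (admissible v).length := by omega
      set c := (admissible v).getD a 0 with hcdef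
      obtain ⟨hc2, hcnt⟩ := admissible_getD_spec h1 hvne ha
      rw [← hcdef] at hcnt
      have hpsi : psiRev (a :: b :: r'') = ins v c := rfl
      have hlen := length_ins v c hc2
      have hinsne : ins v c ≠ [] := by
        intro hcon
        have := congrArg List.length hcon
        rw [hlen] at this
        simp at this
      refine ⟨?_, ?_, ?_⟩
      · rw [hpsi]
        exact isAreaSeq_ins h1 hc2
      · rw [hpsi, hlen, h2]
        simp
      · intro b' r' hbr
        injection hbr with h4 h5
        rw [← h4, hpsi, admissible_length hinsne]
        omega


/-- For a nonempty area sequence `w = u a`, the word `ψ(u)` has at least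
`a + 1` admissible insertion positions (so `ψ(w)` is well defined), and `ψ(w)`
is an area sequence of the same size as `w`. -/
theorem psi_well_defined (u : List ℕ) (a : ℕ) (hw : IsAreaSeq (u ++ [a])) :
    a + 1 ≤ (admissible (psi u)).length ∧
      IsAreaSeq (psi (u ++ [a])) ∧
      (psi (u ++ [a])).length = (u ++ [a]).length := by
  have hw1 : IsAreaSeq ((a :: u.reverse).reverse) := by simpa using hw
  obtain ⟨hA, hL, _⟩ := psiRev_aux (a :: u.reverse) hw1
  have hpsi : psi (u ++ [a]) = psiRev (a :: u.reverse) := by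
    simp [psi]
  refine ⟨?_, by rw [hpsi]; exact hA, by rw [hpsi, hL]; simp⟩
  rcases hu : u.reverse with _ | ⟨b, r''⟩
  · -- u = []
    have hunil : u = [] := by
      have := congrArg List.reverse hu
      simpa using this
    subst hunil
    have ha0 : a = 0 := hw.1 (by simp)
    subst ha0
    show 0 + 1 ≤ (admissible (psi [])).length
    simp [psi, psiRev, admissible]
  · have huval : u = r''.reverse ++ [b] := by
      have := congrArg List.reverse hu
      simpa using this
    have hab : a ≤ b + 1 := by
      apply last_two (l := r''.reverse) (x := b) (y := a)
      rw [huval] at hw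
      simpa using hw
    have hprefix : IsAreaSeq (b :: r'').reverse := by
      have := isAreaSeq_dropLast hw
      rw [huval] at this
      simpa using this
    obtain ⟨_, _, h3⟩ := psiRev_aux (b :: r'') hprefix
    have hadm := h3 b r'' rfl
    have : psi u = psiRev (b :: r'') := by rw [psi, hu]
    rw [this]
    omega
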